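/- Let h : [0,1] → [0,∞) be continuous with h(0) = 0, h increasing and x ↦ h(x)/x decreasing on (0,1], and set G(x) = exp(−h(1−x)/(1−x)) for x ∈ [0,1). Then for every function f holomorphic on 𝔻 and every z ∈ 𝔻: |f(z)|² ≤ (4/π)·(1−|z|)^{−2}·exp(2·h(1−|z|)/(1−|z|))·∫_𝔻 |f(w)|² G(|w|) dA(w), where dA denotes Lebesgue area measure on 𝔻. -/

import Mathlib

open MeasureTheory Set Metric intervalIntegral Real Complex

noncomputable section

lemma cs_interval (g : ℝ → ℝ) (hg : Continuous g) :
    (∫ θ in (0:ℝ)..(2*π), g θ)^2 ≤ (2*π) * ∫ θ in (0:ℝ)..(2*π), g θ ^ 2 := by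
  set I := ∫ θ in (0:ℝ)..(2*π), g θ with hI
  set c := I / (2*π) with hc
  have h2π : (0:ℝ) < 2*π := by positivity
  have hint : ∀ q : ℝ → ℝ, Continuous q → IntervalIntegrable q volume 0 (2*π) :=
    fun q hq => hq.intervalIntegrable _ _
  have hexp : ∫ θ in (0:ℝ)..(2*π), (g θ - c)^2
      = (∫ θ in (0:ℝ)..(2*π), g θ ^ 2) - 2*c*I + (2*π)*c^2 := by
    have heq : ∀ θ, (g θ - c)^2 = g θ ^ 2 - (2*c) * g θ + c^2 := by intro θ; ring
    simp_rw [heq]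
    rw [intervalIntegral.integral_add
        ((hint _ (by fun_prop)).sub ((hint g hg).const_mul (2*c))) intervalIntegrable_const,
        intervalIntegral.integral_sub (hint _ (by fun_prop)) ((hint g hg).const_mul (2*c)),
        intervalIntegral.integral_const_mul, intervalIntegral.integral_const]
    simp only [smul_eq_mul, sub_zero, ← hI]
  have hpos : 0 ≤ ∫ θ in (0:ℝ)..(2*π), (g θ - c)^2 :=
    intervalIntegral.integral_nonneg (by positivity) (fun θ _ => sq_nonneg _)
  rw [hexp] at hpos
  have h1 : (2*π) * c = I := by rw [hc]; field_simp
  nlinarith [sq_nonneg I]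

lemma circle_mean (f : ℂ → ℂ) (hf : DifferentiableOn ℂ f (Metric.ball 0 1)) (z : ℂ) (s : ℝ)
    (hs : 0 < s) (hsub : Metric.closedBall z s ⊆ Metric.ball 0 1) :
    2*π * ‖f z‖ ≤ ∫ θ in (0:ℝ)..(2*π), ‖f (circleMap z s θ)‖ := by
  have hc : ContinuousOn f (Metric.closedBall z s) := hf.continuousOn.mono hsub
  have hd : ∀ w ∈ Metric.ball z s \ (∅ : Set ℂ), DifferentiableAt ℂ f w := fun w hw =>
    hf.differentiableAt (Metric.isOpen_ball.mem_nhds (hsub (Metric.ball_subset_closedBall hw.1)))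
  have hC := Complex.circleIntegral_sub_center_inv_smul_of_differentiable_on_off_countable hs
    Set.countable_empty hc hd
  rw [circleIntegral] at hC
  simp only [deriv_circleMap, circleMap_sub_center, smul_eq_mul] at hC
  have hne : ∀ θ : ℝ, circleMap 0 s θ ≠ 0 := fun θ => by simpa using (circleMap_eq_center_iff (c:=0) (R:=s) (θ:=θ)).not.mpr hs.ne'
  have hC2 : ∫ θ in (0:ℝ)..(2*π), f (circleMap z s θ) = (2*π : ℝ) • f z := by
    have : ∀ θ : ℝ, circleMap 0 s θ * Complex.I * ((circleMap 0 s θ)⁻¹ * f (circleMap z s θ))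
        = Complex.I * f (circleMap z s θ) := by
      intro θ; field_simp [hne θ]
    simp_rw [this] at hC
    rw [intervalIntegral.integral_const_mul] at hC
    have := mul_left_cancel₀ Complex.I_ne_zero (by rw [hC]; rw [real_smul]; push_cast; ring :
      Complex.I * (∫ θ in (0:ℝ)..(2*π), f (circleMap z s θ)) = Complex.I * ((2*π:ℝ) • f z))
    exact this
  calc 2*π*‖f z‖ = ‖∫ θ in (0:ℝ)..(2*π), f (circleMap z s θ)‖ := by
        rw [hC2, norm_smul]; rw [Real.norm_of_nonneg (by positivity : (0:ℝ) ≤ 2*π)]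
    _ ≤ ∫ θ in (0:ℝ)..(2*π), ‖f (circleMap z s θ)‖ :=
        intervalIntegral.norm_integral_le_integral_norm (by positivity)

lemma circle_mean_sq (f : ℂ → ℂ) (hf : DifferentiableOn ℂ f (Metric.ball 0 1)) (z : ℂ) (s : ℝ)
    (hs : 0 < s) (hsub : Metric.closedBall z s ⊆ Metric.ball 0 1) :
    2*π * ‖f z‖^2 ≤ ∫ θ in Ioo (-π) π, ‖f (circleMap z s θ)‖^2 := by
  set g : ℝ → ℝ := fun θ => ‖f (circleMap z s θ)‖ with hg
  have hgc : Continuous g := by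
    have hmem : ∀ θ, circleMap z s θ ∈ Metric.ball (0:ℂ) 1 := fun θ =>
      hsub (circleMap_mem_closedBall z hs.le θ)
    exact (hf.continuousOn.comp_continuous (continuous_circleMap z s) hmem).norm
  have h1 := circle_mean f hf z s hs hsub
  have h2 := cs_interval g hgc
  have hpi : (0:ℝ) < 2*π := by positivity
  have h3 : 2*π * ‖f z‖^2 ≤ ∫ θ in (0:ℝ)..(2*π), g θ ^ 2 := by
    have hnn : 0 ≤ 2*π*‖f z‖ := by positivity
    nlinarith [norm_nonneg (f z), sq_nonneg (∫ θ in (0:ℝ)..(2*π), g θ)]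
  have hper : Function.Periodic (fun θ => g θ ^ 2) (2*π) :=
    ((periodic_circleMap z s).comp (fun w => ‖f w‖ ^ 2))
  have h4 : ∫ θ in (0:ℝ)..(2*π), g θ ^2 = ∫ θ in (-π)..π, g θ ^2 := by
    have := hper.intervalIntegral_add_eq 0 (-π)
    rw [zero_add] at this
    rw [this, show -π + 2*π = π by ring]
  rw [h4, intervalIntegral.integral_of_le (by linarith [Real.pi_pos]),
    MeasureTheory.integral_Ioc_eq_integral_Ioo] at h3
  exact h3

lemma area_submean (f : ℂ → ℂ) (hf : DifferentiableOn ℂ f (Metric.ball 0 1)) (z : ℂ) (r : ℝ)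
    (hr : 0 < r) (hsub : Metric.closedBall z r ⊆ Metric.ball 0 1) :
    π * r^2 * ‖f z‖^2 ≤ ∫ w in Metric.ball z r, ‖f w‖^2 := by
  set F : ℂ → ℝ := fun w => ‖f w‖^2 with hF
  set Φ : ℝ × ℝ → ℝ := fun p => p.1 * F (circleMap z p.1 p.2) with hΦ
  set T : Set (ℝ × ℝ) := Ioo 0 r ×ˢ Ioo (-π) π with hT
  have hπ := Real.pi_pos
  -- continuity of F on the unit ball
  have hFc : ContinuousOn F (Metric.ball (0:ℂ) 1) := (hf.continuousOn.norm).pow 2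
  -- Step 1: translation
  have htrans : ∫ w in Metric.ball z r, F w = ∫ u in Metric.ball (0:ℂ) r, F (z + u) := by
    rw [← MeasureTheory.integral_indicator measurableSet_ball,
      ← MeasureTheory.integral_indicator measurableSet_ball,
      ← integral_add_left_eq_self ((Metric.ball z r).indicator F) z]
    congr 1; ext u
    by_cases hu : u ∈ Metric.ball (0:ℂ) r
    · rw [Set.indicator_of_mem hu, Set.indicator_of_mem (by
        simpa [Metric.mem_ball, dist_eq_norm] using hu)]
    · rw [Set.indicator_of_notMem hu, Set.indicator_of_notMem (by
        simpa [Metric.mem_ball, dist_eq_norm] using hu)]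
  -- Step 2: polar coordinates
  have hpolar : ∫ u in Metric.ball (0:ℂ) r, F (z + u) = ∫ p in T, Φ p := by
    have hTsub : T ⊆ polarCoord.target := by
      rw [polarCoord_target]
      exact Set.prod_mono (Set.Ioo_subset_Ioi_self) (le_refl _)
    have := Complex.integral_comp_polarCoord_symm
      ((Metric.ball (0:ℂ) r).indicator (fun u => F (z + u)))
    rw [MeasureTheory.integral_indicator measurableSet_ball] at this
    rw [← this]
    have hcongr : ∀ p ∈ polarCoord.target,
        p.1 • (Metric.ball (0:ℂ) r).indicator (fun u => F (z + u)) (Complex.polarCoord.symm p)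
          = T.indicator Φ p := by
      rintro ⟨x, θ⟩ hp
      rw [polarCoord_target] at hp
      obtain ⟨hx, hθ⟩ := hp
      have hx0 : 0 < x := hx
      have hcm : z + Complex.polarCoord.symm (x, θ) = circleMap z x θ := by
        simp only [Complex.polarCoord_symm_apply, circleMap, Complex.exp_mul_I]
        push_cast; ring
      by_cases hxr : x < r
      · rw [Set.indicator_of_mem, Set.indicator_of_mem]
        · simp only [smul_eq_mul, hΦ]; rw [hcm]
        · exact ⟨⟨hx0, hxr⟩, hθ⟩
        · simp only [Metric.mem_ball, dist_zero_right, Complex.norm_polarCoord_symm]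
          rwa [abs_of_pos hx0]
      · rw [Set.indicator_of_notMem, Set.indicator_of_notMem]
        · simp
        · exact fun hmem => hxr hmem.1.2
        · simp only [Metric.mem_ball, dist_zero_right, Complex.norm_polarCoord_symm]
          rw [abs_of_pos hx0]; exact hxr
    rw [setIntegral_congr_fun polarCoord.open_target.measurableSet hcongr,
      setIntegral_indicator (measurableSet_Ioo.prod measurableSet_Ioo),
      Set.inter_eq_self_of_subset_right hTsub]
  -- Step 3: integrability of Φ on T
  have hKc : IsCompact (Icc (0:ℝ) r ×ˢ Icc (-π) π) := isCompact_Icc.prod isCompact_Icc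
  have hcmc : Continuous (fun p : ℝ × ℝ => circleMap z p.1 p.2) := by
    simp only [circleMap]; fun_prop
  have hmaps : ∀ p ∈ Icc (0:ℝ) r ×ˢ Icc (-π) π,
      circleMap z p.1 p.2 ∈ Metric.ball (0:ℂ) 1 := by
    rintro ⟨x, θ⟩ ⟨hx, -⟩
    exact hsub ((Metric.closedBall_subset_closedBall hx.2) (circleMap_mem_closedBall z hx.1 θ))
  have hΦcont : ContinuousOn Φ (Icc (0:ℝ) r ×ˢ Icc (-π) π) :=
    (continuous_fst.continuousOn).mul (hFc.comp hcmc.continuousOn hmaps)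
  have hΦK : IntegrableOn Φ (Icc (0:ℝ) r ×ˢ Icc (-π) π) := hΦcont.integrableOn_compact hKc
  have hΦT : IntegrableOn Φ T :=
    hΦK.mono_set (Set.prod_mono Set.Ioo_subset_Icc_self Set.Ioo_subset_Icc_self)
  -- Step 4: Fubini
  have hres : (volume : Measure (ℝ × ℝ)).restrict T
      = (volume.restrict (Ioo 0 r)).prod (volume.restrict (Ioo (-π) π)) := by
    rw [Measure.prod_restrict, ← Measure.volume_eq_prod]
  have hΦint : Integrable Φ ((volume.restrict (Ioo 0 r)).prod (volume.restrict (Ioo (-π) π))) := by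
    rw [← hres]; exact hΦT
  have hfub : ∫ p in T, Φ p
      = ∫ x in Ioo 0 r, ∫ θ in Ioo (-π) π, Φ (x, θ) := by
    rw [← setIntegral_prod _ ?_]
    · rfl
    · rw [← Measure.volume_eq_prod]; exact hΦT
  have hinner : ∀ x ∈ Ioo (0:ℝ) r, (2*π*‖f z‖^2) * x ≤ ∫ θ in Ioo (-π) π, Φ (x, θ) := by
    intro x hx
    have hsubx : Metric.closedBall z x ⊆ Metric.ball 0 1 :=
      subset_trans (Metric.closedBall_subset_closedBall hx.2.le) hsub
    have hcm := circle_mean_sq f hf z x hx.1 hsubx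
    have heq : ∫ θ in Ioo (-π) π, Φ (x, θ) = x * ∫ θ in Ioo (-π) π, F (circleMap z x θ) := by
      simp only [hΦ]
      exact MeasureTheory.integral_const_mul _ _
    rw [heq, mul_comm (2*π*‖f z‖^2) x]
    exact mul_le_mul_of_nonneg_left hcm hx.1.le
  have hlhsint : IntegrableOn (fun x => (2*π*‖f z‖^2) * x) (Ioo 0 r) :=
    ((continuous_const.mul continuous_id).integrableOn_Icc).mono_set Set.Ioo_subset_Icc_self
  have hbigint : IntegrableOn (fun x => ∫ θ in Ioo (-π) π, Φ (x, θ)) (Ioo 0 r) :=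
    hΦint.integral_prod_left
  have hid : ∫ x in Ioo (0:ℝ) r, x = r^2/2 := by
    rw [← MeasureTheory.integral_Ioc_eq_integral_Ioo, ← intervalIntegral.integral_of_le hr.le,
      integral_id]
    ring
  calc π * r^2 * ‖f z‖^2 = ∫ x in Ioo (0:ℝ) r, (2*π*‖f z‖^2) * x := by
        rw [MeasureTheory.integral_const_mul, hid]; ring
    _ ≤ ∫ x in Ioo (0:ℝ) r, ∫ θ in Ioo (-π) π, Φ (x, θ) :=
        setIntegral_mono_on hlhsint hbigint measurableSet_Ioo hinner
    _ = ∫ p in T, Φ p := hfub.symm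
    _ = ∫ w in Metric.ball z r, F w := by rw [← hpolar, ← htrans]

theorem statement18 (h : ℝ → ℝ)
    (hcont : ContinuousOn h (Set.Icc 0 1)) (h0 : h 0 = 0)
    (hnonneg : ∀ x ∈ Set.Icc (0 : ℝ) 1, 0 ≤ h x)
    (hmono : MonotoneOn h (Set.Icc 0 1))
    (hdec : AntitoneOn (fun x => h x / x) (Set.Ioc 0 1))
    (f : ℂ → ℂ) (hf : DifferentiableOn ℂ f (Metric.ball 0 1))
    (z : ℂ) (hz : ‖z‖ < 1) :
    ENNReal.ofReal (‖f z‖ ^ 2) ≤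
      ENNReal.ofReal ((4 / Real.pi) * (1 - ‖z‖)⁻¹ ^ 2 *
          Real.exp (2 * h (1 - ‖z‖) / (1 - ‖z‖))) *
        ∫⁻ w in Metric.ball (0 : ℂ) 1,
          ENNReal.ofReal (‖f w‖ ^ 2 * Real.exp (-(h (1 - ‖w‖) / (1 - ‖w‖)))) := by
  have hπ := Real.pi_pos
  set d := 1 - ‖z‖ with hd
  have hd0 : 0 < d := by rw [hd]; linarith
  have hd1 : d ≤ 1 := by rw [hd]; have := norm_nonneg z; linarith
  set r := d / 2 with hrdef
  have hr : 0 < r := by positivity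
  have hsub : Metric.closedBall z r ⊆ Metric.ball (0:ℂ) 1 := by
    intro w hw
    simp only [Metric.mem_closedBall, dist_eq_norm] at hw
    simp only [Metric.mem_ball, dist_zero_right]
    calc ‖w‖ ≤ ‖w - z‖ + ‖z‖ := by simpa using norm_add_le (w - z) z
      _ ≤ r + ‖z‖ := by linarith
      _ < 1 := by simp only [hrdef, hd]; linarith
  set H := h d / d with hH
  set c := Real.exp (-(2 * h d / d)) with hc
  -- weight lower bound on ball z r
  have hweight : ∀ w ∈ Metric.ball z r, c ≤ Real.exp (-(h (1 - ‖w‖) / (1 - ‖w‖))) := by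
    intro w hw
    simp only [Metric.mem_ball, dist_eq_norm] at hw
    set t := 1 - ‖w‖ with ht
    have hwn : ‖w‖ < r + ‖z‖ := by
      calc ‖w‖ ≤ ‖w - z‖ + ‖z‖ := by simpa using norm_add_le (w - z) z
        _ < r + ‖z‖ := by linarith
    have h2r : r + r = d := by rw [hrdef]; ring
    have htr : r < t := by rw [ht]; rw [hd] at h2r; linarith
    have ht1 : t ≤ 1 := by rw [ht]; have := norm_nonneg w; linarith
    have hrI : r ∈ Set.Ioc (0:ℝ) 1 := ⟨hr, by linarith⟩
    have htI : t ∈ Set.Ioc (0:ℝ) 1 := ⟨by linarith, ht1⟩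
    have h1 : h t / t ≤ h r / r := hdec hrI htI htr.le
    have h2 : h r ≤ h d := hmono ⟨hr.le, by linarith⟩ ⟨hd0.le, hd1⟩ (by rw [hrdef]; linarith)
    have h3 : h r / r ≤ 2 * h d / d := by
      rw [hrdef, div_div_eq_mul_div, div_le_div_iff₀ (by linarith) hd0]
      nlinarith
    apply Real.exp_le_exp.2
    simp only [neg_le_neg_iff]
    exact le_trans h1 h3
  -- the area sub-mean value inequality
  have hmean := area_submean f hf z r hr hsub
  -- integrability of ‖f ⬝‖² on ball z r
  have hFc : ContinuousOn (fun w => ‖f w‖^2) (Metric.closedBall z r) :=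
    ((hf.continuousOn.mono hsub).norm).pow 2
  have hFi : IntegrableOn (fun w => ‖f w‖^2) (Metric.ball z r) :=
    (hFc.integrableOn_compact (isCompact_closedBall z r)).mono_set Metric.ball_subset_closedBall
  set L := ∫⁻ w in Metric.ball z r, ENNReal.ofReal (‖f w‖^2) with hL
  have hLeq : ENNReal.ofReal (∫ w in Metric.ball z r, ‖f w‖^2) = L :=
    MeasureTheory.ofReal_integral_eq_lintegral_ofReal hFi
      (Filter.Eventually.of_forall fun w => by positivity)
  have hstep1 : ENNReal.ofReal (π * r^2 * ‖f z‖^2) ≤ L := by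
    rw [← hLeq]; exact ENNReal.ofReal_le_ofReal hmean
  -- pass to the weighted integral
  have hstep2 : ENNReal.ofReal c * L ≤
      ∫⁻ w in Metric.ball (0:ℂ) 1,
        ENNReal.ofReal (‖f w‖ ^ 2 * Real.exp (-(h (1 - ‖w‖) / (1 - ‖w‖)))) := by
    have e1 : ENNReal.ofReal c * L
        = ∫⁻ w in Metric.ball z r, ENNReal.ofReal (‖f w‖^2 * c) := by
      rw [hL, ← MeasureTheory.lintegral_const_mul' _ _ ENNReal.ofReal_ne_top]
      congr 1; funext w
      rw [← ENNReal.ofReal_mul (by positivity : (0:ℝ) ≤ c)]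
      ring_nf
    rw [e1]
    calc ∫⁻ w in Metric.ball z r, ENNReal.ofReal (‖f w‖^2 * c)
        ≤ ∫⁻ w in Metric.ball z r,
            ENNReal.ofReal (‖f w‖ ^ 2 * Real.exp (-(h (1 - ‖w‖) / (1 - ‖w‖)))) := by
          refine MeasureTheory.setLIntegral_mono' measurableSet_ball fun w hw => ?_
          exact ENNReal.ofReal_le_ofReal
            (mul_le_mul_of_nonneg_left (hweight w hw) (by positivity))
      _ ≤ _ := MeasureTheory.lintegral_mono_set
          (fun w hw => hsub (Metric.ball_subset_closedBall hw))
  -- combine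
  have hCc : ENNReal.ofReal ((4 / π) * (1 - ‖z‖)⁻¹ ^ 2 * Real.exp (2 * h (1 - ‖z‖) / (1 - ‖z‖)))
        * ENNReal.ofReal c = ENNReal.ofReal ((π * r^2)⁻¹) := by
    rw [← ENNReal.ofReal_mul (by positivity)]
    congr 1
    rw [hc, ← hd, Real.exp_neg]
    rw [hrdef]
    field_simp
    ring
  calc ENNReal.ofReal (‖f z‖ ^ 2)
      = ENNReal.ofReal ((π * r^2)⁻¹) * ENNReal.ofReal (π * r^2 * ‖f z‖^2) := by
        rw [← ENNReal.ofReal_mul (by positivity)]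
        congr 1
        field_simp
    _ ≤ ENNReal.ofReal ((π * r^2)⁻¹) * L := by
        exact mul_le_mul_right hstep1 _
    _ = ENNReal.ofReal ((4 / π) * (1 - ‖z‖)⁻¹ ^ 2 *
          Real.exp (2 * h (1 - ‖z‖) / (1 - ‖z‖))) * (ENNReal.ofReal c * L) := by
        rw [← mul_assoc, hCc]
    _ ≤ _ := mul_le_mul_right hstep2 _
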